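/- Let c > 0 and let a : (−c²/2, c²/3) → (0, c) be differentiable with ∫₀^{a(ξ)} (ξ + (c² − a(ξ)²)/2 − s²)·√((a(ξ)² − s²)/(c² − s²)) ds = 0 for every ξ in the interval. Define h(ξ) = −(∫₀^{a(ξ)} s²·((c² − s²)(a(ξ)² − s²))^{−1/2} ds)/(∫₀^{a(ξ)} ((c² − s²)(a(ξ)² − s²))^{−1/2} ds) and z(ξ) = (12ξ(c² − a(ξ)²) + 3c⁴ + 9a(ξ)⁴ − 6a(ξ)²c²)/2. Then for every ξ ∈ (−c²/2, c²/3), z′(ξ) = 6(c² + a(ξ)²) + 12h(ξ), i.e. (1/6)·(dz/dξ) = c² + a(ξ)² + 2h(ξ). -/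

import Mathlib

open Set MeasureTheory intervalIntegral
open scoped Topology Filter Interval

noncomputable def zww (t : ℝ) : ℝ := Real.sqrt (1 - t^2)
noncomputable def zpp (c m t : ℝ) : ℝ := (Real.sqrt (c^2 - m * t^2))⁻¹
noncomputable def zqq (c m t : ℝ) : ℝ := ((c^2 - m * t^2) * Real.sqrt (c^2 - m * t^2))⁻¹
noncomputable def zLL (c m : ℝ) (j : ℕ) : ℝ := ∫ t in (0:ℝ)..1, t^j * zww t * zpp c m t
noncomputable def zMM (c m : ℝ) (j : ℕ) : ℝ := ∫ t in (0:ℝ)..1, t^j * (zww t)⁻¹ * zpp c m t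
noncomputable def zDL (c m : ℝ) (j : ℕ) : ℝ :=
  ∫ t in (0:ℝ)..1, t^j * zww t * (t^2/2) * zqq c m t

lemma zupos {c m : ℝ} (hm : 0 < m) (hmc : m < c^2) {t : ℝ} (ht : t ∈ Icc (0:ℝ) 1) :
    0 < c^2 - m * t^2 := by
  obtain ⟨h0, h1⟩ := ht
  have h2 : t^2 ≤ 1 := by nlinarith
  nlinarith [mul_nonneg hm.le (sub_nonneg.2 h2)]

lemma zpp_contOn {c m : ℝ} (hm : 0 < m) (hmc : m < c^2) :
    ContinuousOn (fun t => zpp c m t) (Icc (0:ℝ) 1) := by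
  apply ContinuousOn.inv₀
  · exact (Real.continuous_sqrt.comp (by continuity)).continuousOn
  · intro t ht
    exact (Real.sqrt_pos.2 (zupos hm hmc ht)).ne'

lemma zqq_contOn {c m : ℝ} (hm : 0 < m) (hmc : m < c^2) :
    ContinuousOn (fun t => zqq c m t) (Icc (0:ℝ) 1) := by
  apply ContinuousOn.inv₀
  · exact ((by continuity : Continuous fun t : ℝ => c^2 - m * t^2).continuousOn).mul
      (Real.continuous_sqrt.comp (by continuity)).continuousOn
  · intro t ht
    have h := zupos hm hmc ht
    positivity

lemma zL_intble {c m : ℝ} (hm : 0 < m) (hmc : m < c^2) (j : ℕ) :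
    IntervalIntegrable (fun t => t^j * zww t * zpp c m t) volume 0 1 := by
  apply ContinuousOn.intervalIntegrable
  rw [uIcc_of_le (by norm_num : (0:ℝ) ≤ 1)]
  exact (((continuous_pow j).continuousOn).mul
    (Real.continuous_sqrt.comp (by continuity)).continuousOn).mul (zpp_contOn hm hmc)

lemma zDL_intble {c m : ℝ} (hm : 0 < m) (hmc : m < c^2) (j : ℕ) :
    IntervalIntegrable (fun t => t^j * zww t * (t^2/2) * zqq c m t) volume 0 1 := by
  apply ContinuousOn.intervalIntegrable
  rw [uIcc_of_le (by norm_num : (0:ℝ) ≤ 1)]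
  exact ((((continuous_pow j).continuousOn).mul
    (Real.continuous_sqrt.comp (by continuity)).continuousOn).mul
    (by continuity : Continuous fun t : ℝ => t^2/2).continuousOn).mul (zqq_contOn hm hmc)

lemma zM_intble' (c m : ℝ) (hm : 0 < m) (hmc : m < c^2) (j : ℕ) :
    IntervalIntegrable (fun t => t^j * (zww t)⁻¹ * zpp c m t) volume 0 1 := by
  have hrp : IntervalIntegrable (fun t : ℝ => (1 - t) ^ (-(1/2) : ℝ)) volume 0 1 := by
    have := (intervalIntegrable_rpow' (by norm_num : (-1:ℝ) < -(1/2))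
      (a := 0) (b := 1) ).comp_sub_left 1
    simpa using this.symm
  have hbd : IntervalIntegrable
      (fun t : ℝ => (Real.sqrt (c^2 - m))⁻¹ * (1 - t) ^ (-(1/2) : ℝ)) volume 0 1 :=
    hrp.const_mul _
  apply hbd.mono_fun
  · apply Measurable.aestronglyMeasurable
    apply Measurable.mul
    apply Measurable.mul
    · exact (measurable_id.pow_const j)
    · exact (Real.continuous_sqrt.comp (by continuity)).measurable.inv
    · exact (Real.continuous_sqrt.comp (by continuity)).measurable.inv
  · rw [Filter.EventuallyLE, ae_restrict_iff' measurableSet_uIoc]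
    apply Filter.Eventually.of_forall
    intro t ht
    rw [uIoc_of_le (by norm_num : (0:ℝ) ≤ 1)] at ht
    obtain ⟨ht0, ht1⟩ := ht
    have h1t : (0:ℝ) ≤ 1 - t := by linarith
    have hu : 0 < c^2 - m * t^2 := by
      have h2 : t^2 ≤ 1 := by nlinarith
      nlinarith [mul_nonneg hm.le (sub_nonneg.2 h2)]
    have hcm : (0:ℝ) < c^2 - m := by linarith
    simp only [zww, zpp, norm_mul, norm_inv, Real.norm_eq_abs]
    rw [abs_of_nonneg (Real.sqrt_nonneg _), abs_of_nonneg (Real.sqrt_nonneg _),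
      abs_of_nonneg (Real.sqrt_nonneg _),
      abs_of_nonneg (by positivity : (0:ℝ) ≤ t^j),
      abs_of_nonneg (by positivity : (0:ℝ) ≤ (1-t) ^ (-(1/2):ℝ))]
    have e1 : (1 - t) ^ (-(1/2) : ℝ) = (Real.sqrt (1 - t))⁻¹ := by
      rw [Real.sqrt_eq_rpow, ← Real.rpow_neg h1t]
    rw [e1]
    show t^j * (Real.sqrt (1 - t^2))⁻¹ * (Real.sqrt (c^2 - m*t^2))⁻¹ ≤ _
    rcases eq_or_lt_of_le ht1 with h1 | h1
    · subst h1; norm_num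
    · have hw0 : 0 < Real.sqrt (1 - t) := Real.sqrt_pos.2 (by linarith)
      have hw : Real.sqrt (1 - t) ≤ Real.sqrt (1 - t^2) := by
        apply Real.sqrt_le_sqrt; nlinarith
      have hp : Real.sqrt (c^2 - m) ≤ Real.sqrt (c^2 - m*t^2) := by
        apply Real.sqrt_le_sqrt; nlinarith [mul_nonneg hm.le (sq_nonneg (1-t))]
      have htj : t^j ≤ 1 := pow_le_one₀ ht0.le ht1
      have h2 := inv_anti₀ hw0 hw
      have h3 := inv_anti₀ (Real.sqrt_pos.2 hcm) hp
      calc t^j * (Real.sqrt (1 - t^2))⁻¹ * (Real.sqrt (c^2 - m*t^2))⁻¹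
          ≤ 1 * (Real.sqrt (1-t))⁻¹ * (Real.sqrt (c^2 - m))⁻¹ := by
            apply mul_le_mul (mul_le_mul htj h2 (by positivity) (by norm_num)) h3
              (by positivity) (by positivity)
        _ = (Real.sqrt (c^2 - m))⁻¹ * (Real.sqrt (1-t))⁻¹ := by ring

lemma zM0_pos {c m : ℝ} (hm : 0 < m) (hmc : m < c^2) : 0 < zMM c m 0 := by
  apply intervalIntegral_pos_of_pos_on (zM_intble' c m hm hmc 0) _ (by norm_num)
  intro t ht
  obtain ⟨ht0, ht1⟩ := ht
  have h1 : (0:ℝ) < 1 - t^2 := by nlinarith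
  have h2 : (0:ℝ) < c^2 - m * t^2 := zupos hm hmc ⟨ht0.le, ht1.le⟩
  have : (0:ℝ) < zww t := Real.sqrt_pos.2 h1
  have : (0:ℝ) < zpp c m t := by
    simp only [zpp]; exact inv_pos.2 (Real.sqrt_pos.2 h2)
  positivity

lemma zLM (c m : ℝ) (hm : 0 < m) (hmc : m < c^2) (j : ℕ) :
    zLL c m j = zMM c m j - zMM c m (j+2) := by
  have h1 := zM_intble' c m hm hmc j
  have h2 := zM_intble' c m hm hmc (j+2)
  rw [zMM, zMM, ← intervalIntegral.integral_sub h1 h2]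
  apply intervalIntegral.integral_congr
  intro t ht
  rw [uIcc_of_le (by norm_num : (0:ℝ) ≤ 1)] at ht
  obtain ⟨ht0, ht1⟩ := ht
  rcases eq_or_lt_of_le ht1 with h | h
  · subst h
    simp [zww, zpp]
  · have hw : (0:ℝ) < zww t := Real.sqrt_pos.2 (by nlinarith)
    have hsq : zww t * zww t = 1 - t^2 := Real.mul_self_sqrt (by nlinarith)
    have : t^j * zww t = t^j * (zww t)⁻¹ - t^(j+2) * (zww t)⁻¹ := by
      rw [eq_sub_iff_add_eq]
      field_simp
      linear_combination (t^j) * hsq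
    show t^j * zww t * zpp c m t = t^j * (zww t)⁻¹ * zpp c m t - t^(j+2) * (zww t)⁻¹ * zpp c m t
    rw [show t^j * zww t * zpp c m t = (t^j * zww t) * zpp c m t by ring, this]
    ring

lemma zQ_intble {c m : ℝ} (hm : 0 < m) (hmc : m < c^2) (j : ℕ) :
    IntervalIntegrable (fun t => m * t^j * zww t * zqq c m t) volume 0 1 := by
  apply ContinuousOn.intervalIntegrable
  rw [uIcc_of_le (by norm_num : (0:ℝ) ≤ 1)]
  exact (((continuous_const.mul (continuous_pow j)).continuousOn).mul
    (Real.continuous_sqrt.comp (by continuity)).continuousOn).mul (zqq_contOn hm hmc)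

lemma zibp (c m : ℝ) (hm : 0 < m) (hmc : m < c^2) (n : ℕ) :
    ∫ t in (0:ℝ)..1, (((n:ℝ)+1) * t^n * zww t * zpp c m t
      - t^(n+2) * (zww t)⁻¹ * zpp c m t + m * t^(n+2) * zww t * zqq c m t) = 0 := by
  set g : ℝ → ℝ := fun t => ((n:ℝ)+1) * t^n * zww t * zpp c m t
      - t^(n+2) * (zww t)⁻¹ * zpp c m t + m * t^(n+2) * zww t * zqq c m t with hg
  set F : ℝ → ℝ := fun t => t^(n+1) * zww t * zpp c m t with hF
  have hgint : IntervalIntegrable g volume 0 1 := by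
    have e1 : (fun t : ℝ => ((n:ℝ)+1) * t^n * zww t * zpp c m t)
        = fun t : ℝ => ((n:ℝ)+1) * (t^n * zww t * zpp c m t) := by funext t; ring
    have i1 : IntervalIntegrable (fun t : ℝ => ((n:ℝ)+1) * t^n * zww t * zpp c m t)
        volume 0 1 := by rw [e1]; exact (zL_intble hm hmc n).const_mul _
    exact (i1.sub (zM_intble' c m hm hmc (n+2))).add (zQ_intble hm hmc (n+2))
  -- step: for b ∈ Ico 0 1, the primitive equals F b
  have hstep : ∀ b ∈ Ico (0:ℝ) 1, (∫ t in (0:ℝ)..b, g t) = F b := by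
    intro b hb
    have hderiv : ∀ x ∈ uIcc (0:ℝ) b, HasDerivAt F (g x) x := by
      intro x hx
      rw [uIcc_of_le hb.1] at hx
      obtain ⟨hx0, hxb⟩ := hx
      have hx1 : x < 1 := lt_of_le_of_lt hxb hb.2
      have h1x : (0:ℝ) < 1 - x^2 := by nlinarith
      have hux : (0:ℝ) < c^2 - m*x^2 := zupos hm hmc ⟨hx0, hx1.le⟩
      have hw : HasDerivAt (fun t : ℝ => Real.sqrt (1 - t^2))
          (-(2*x) / (2 * Real.sqrt (1-x^2))) x := by
        have inner : HasDerivAt (fun t : ℝ => 1 - t^2) (-(2*x)) x := by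
          simpa using ((hasDerivAt_pow 2 x).const_sub 1)
        exact inner.sqrt h1x.ne'
      have innu : HasDerivAt (fun t : ℝ => c^2 - m*t^2) (-(m*(2*x))) x := by
        have := ((hasDerivAt_pow 2 x).const_mul m).const_sub (c^2)
        simpa using this
      have hp : HasDerivAt (fun t : ℝ => (Real.sqrt (c^2 - m*t^2))⁻¹)
          (-(-(m*(2*x)) / (2 * Real.sqrt (c^2-m*x^2))) / (Real.sqrt (c^2-m*x^2))^2) x :=
        (innu.sqrt hux.ne').inv (Real.sqrt_pos.2 hux).ne'
      have hFx := ((hasDerivAt_pow (n+1) x).mul hw).mul hp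
      have hzw : zww x = Real.sqrt (1 - x^2) := rfl
      have hzp : zpp c m x = (Real.sqrt (c^2 - m*x^2))⁻¹ := rfl
      have hzq : zqq c m x = ((c^2 - m*x^2) * Real.sqrt (c^2 - m*x^2))⁻¹ := rfl
      have hgoal : g x = (((n:ℝ)+1) * x ^ (n + 1 - 1) * Real.sqrt (1 - x^2)
            + x^(n+1) * (-(2*x) / (2 * Real.sqrt (1-x^2)))) * (Real.sqrt (c^2 - m*x^2))⁻¹
            + x^(n+1) * Real.sqrt (1-x^2) *
              (-(-(m*(2*x)) / (2 * Real.sqrt (c^2-m*x^2))) / (Real.sqrt (c^2-m*x^2))^2) := by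
        have hwne : Real.sqrt (1-x^2) ≠ 0 := (Real.sqrt_pos.2 h1x).ne'
        have hune : Real.sqrt (c^2-m*x^2) ≠ 0 := (Real.sqrt_pos.2 hux).ne'
        have e1 : Real.sqrt (1-x^2) * Real.sqrt (1-x^2) = 1-x^2 := Real.mul_self_sqrt h1x.le
        have e2 : Real.sqrt (c^2-m*x^2) * Real.sqrt (c^2-m*x^2) = c^2-m*x^2 :=
          Real.mul_self_sqrt hux.le
        rw [hg]
        simp only [hzw, hzp, hzq, Nat.add_sub_cancel]
        field_simp
        have hne2 : c^2 - x^2*m ≠ 0 := by nlinarith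
        rw [show √(c^2 - x^2*m)^3 = √(c^2 - x^2*m) * (c^2 - x^2*m) by
          rw [pow_succ, Real.sq_sqrt (by nlinarith)]; ring]
        rw [Real.sq_sqrt (by nlinarith : (0:ℝ) ≤ c^2 - x^2*m)]
        field_simp
        ring
      rw [hgoal]
      exact hFx.congr_deriv (by simp only [Nat.cast_add, Nat.cast_one, Pi.mul_apply])
    have hsub : Ι 0 b ⊆ Ι (0:ℝ) 1 := by
      rw [uIoc_of_le hb.1, uIoc_of_le (by norm_num : (0:ℝ) ≤ 1)]
      exact Ioc_subset_Ioc le_rfl hb.2.le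
    have heval := intervalIntegral.integral_eq_sub_of_hasDerivAt hderiv (hgint.mono_set' hsub)
    have hF0 : F 0 = 0 := by simp [hF]
    rw [heval, hF0, sub_zero]
  -- continuity and limit
  have hFc : ContinuousOn F (Icc (0:ℝ) 1) := by
    exact (((continuous_pow (n+1)).continuousOn).mul
      (Real.continuous_sqrt.comp (by continuity)).continuousOn).mul (zpp_contOn hm hmc)
  have hprim : ContinuousOn (fun b => ∫ t in (0:ℝ)..b, g t) (Icc (0:ℝ) 1) := by
    have := continuousOn_primitive_interval' hgint left_mem_uIcc
    rwa [uIcc_of_le (by norm_num : (0:ℝ) ≤ 1)] at this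
  have hne : (𝓝[Ico (0:ℝ) 1] 1).NeBot := by
    apply mem_closure_iff_nhdsWithin_neBot.1
    rw [closure_Ico (by norm_num : (0:ℝ) ≠ 1)]
    exact ⟨by norm_num, le_rfl⟩
  have h1 : Filter.Tendsto (fun b => ∫ t in (0:ℝ)..b, g t) (𝓝[Ico (0:ℝ) 1] 1)
      (𝓝 (∫ t in (0:ℝ)..1, g t)) :=
    ((hprim 1 (by norm_num)).mono_left (nhdsWithin_mono _ Ico_subset_Icc_self))
  have h2 : Filter.Tendsto F (𝓝[Ico (0:ℝ) 1] 1) (𝓝 (F 1)) :=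
    ((hFc 1 (by norm_num)).mono_left (nhdsWithin_mono _ Ico_subset_Icc_self))
  have heq : (fun b => ∫ t in (0:ℝ)..b, g t) =ᶠ[𝓝[Ico (0:ℝ) 1] 1] F :=
    Filter.eventually_iff_exists_mem.2 ⟨Ico 0 1, self_mem_nhdsWithin, hstep⟩
  have h3 : Filter.Tendsto (fun b => ∫ t in (0:ℝ)..b, g t) (𝓝[Ico (0:ℝ) 1] 1) (𝓝 (F 1)) :=
    h2.congr' heq.symm
  have h4 := tendsto_nhds_unique h1 h3
  have hF1 : F 1 = 0 := by norm_num [hF, zww]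
  rw [h4, hF1]

lemma zww_meas : Measurable zww :=
  (Real.continuous_sqrt.comp (continuous_const.sub (continuous_pow 2))).measurable

lemma zpp_meas (c x : ℝ) : Measurable (zpp c x) :=
  ((Real.continuous_sqrt.comp (continuous_const.sub (continuous_const.mul
    (continuous_pow 2)))).measurable).inv

lemma zqq_meas (c x : ℝ) : Measurable (zqq c x) :=
  (((continuous_const.sub (continuous_const.mul (continuous_pow 2))).mul
    (Real.continuous_sqrt.comp (continuous_const.sub (continuous_const.mul
      (continuous_pow 2))))).measurable).inv

set_option maxHeartbeats 1000000 in
lemma zLL_hasDeriv (c m : ℝ) (hm : 0 < m) (hmc : m < c^2) (j : ℕ) :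
    HasDerivAt (fun x => zLL c x j) (zDL c m j) m := by
  set δ : ℝ := (c^2 - m)/2 with hδ
  have hδ0 : 0 < δ := by rw [hδ]; linarith
  set ε : ℝ := min m (c^2 - m) / 2 with hε
  have hε0 : 0 < ε := by
    apply div_pos _ (by norm_num)
    exact lt_min hm (by linarith)
  have hball : ∀ x ∈ Metric.ball m ε, 0 < x ∧ δ ≤ c^2 - x := by
    intro x hx
    rw [Metric.mem_ball, Real.dist_eq, abs_lt] at hx
    have h1 : ε ≤ m / 2 := by
      rw [hε]; gcongr; exact min_le_left _ _
    have h2 : ε ≤ (c^2 - m) / 2 := by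
      rw [hε]; gcongr; exact min_le_right _ _
    constructor
    · linarith [hx.1]
    · rw [hδ]; linarith [hx.2]
  have hu : ∀ x ∈ Metric.ball m ε, ∀ t ∈ Icc (0:ℝ) 1, δ ≤ c^2 - x * t^2 := by
    intro x hx t ht
    obtain ⟨hx0, hxc⟩ := hball x hx
    obtain ⟨ht0, ht1⟩ := ht
    have h2 : t^2 ≤ 1 := by nlinarith
    have : x * t^2 ≤ x := by nlinarith [mul_nonneg hx0.le (sub_nonneg.2 h2)]
    linarith
  have key := intervalIntegral.hasDerivAt_integral_of_dominated_loc_of_deriv_le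
    (F := fun x t => t^j * zww t * zpp c x t)
    (F' := fun x t => t^j * zww t * (t^2/2) * zqq c x t)
    (x₀ := m) (a := 0) (b := 1) (μ := volume)
    (bound := fun _ => (δ * Real.sqrt δ)⁻¹) (Metric.ball_mem_nhds m hε0) ?_ ?_ ?_ ?_ ?_ ?_
  · exact key.2
  · -- measurability of F x
    apply Filter.Eventually.of_forall
    intro x
    exact (((measurable_id.pow_const j).mul zww_meas).mul (zpp_meas c x)).aestronglyMeasurable
  · exact zL_intble hm hmc j
  · exact ((((measurable_id.pow_const j).mul zww_meas).mul
      ((measurable_id.pow_const 2).div_const 2)).mul (zqq_meas c m)).aestronglyMeasurable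
  · -- bound
    apply Filter.Eventually.of_forall
    intro t ht x hx
    rw [uIoc_of_le (by norm_num : (0:ℝ) ≤ 1)] at ht
    obtain ⟨ht0, ht1⟩ := ht
    have hut := hu x hx t ⟨ht0.le, ht1⟩
    have hu0 : (0:ℝ) < c^2 - x * t^2 := lt_of_lt_of_le hδ0 hut
    have hs : Real.sqrt δ ≤ Real.sqrt (c^2 - x*t^2) := Real.sqrt_le_sqrt hut
    have hprod : δ * Real.sqrt δ ≤ (c^2 - x*t^2) * Real.sqrt (c^2 - x*t^2) := by
      apply mul_le_mul hut hs (Real.sqrt_nonneg _) hu0.le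
    have hinv : ((c^2 - x*t^2) * Real.sqrt (c^2 - x*t^2))⁻¹ ≤ (δ * Real.sqrt δ)⁻¹ :=
      inv_anti₀ (by positivity) hprod
    have hq0 : (0:ℝ) ≤ ((c^2 - x*t^2) * Real.sqrt (c^2 - x*t^2))⁻¹ := by positivity
    have hw1 : zww t ≤ 1 := Real.sqrt_le_one.2 (by nlinarith)
    have hw0 : 0 ≤ zww t := Real.sqrt_nonneg _
    have htj : t^j ≤ 1 := pow_le_one₀ ht0.le ht1
    show ‖t^j * zww t * (t^2/2) * zqq c x t‖ ≤ (δ * Real.sqrt δ)⁻¹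
    rw [Real.norm_eq_abs, show zqq c x t = ((c^2 - x*t^2) * Real.sqrt (c^2 - x*t^2))⁻¹ from rfl]
    have habs : 0 ≤ t^j * zww t * (t^2/2) * ((c^2 - x*t^2) * Real.sqrt (c^2 - x*t^2))⁻¹ := by
      have := Real.sqrt_nonneg (1 - t^2)
      have : 0 ≤ zww t := this
      positivity
    rw [abs_of_nonneg habs]
    calc t^j * zww t * (t^2/2) * ((c^2 - x*t^2) * Real.sqrt (c^2 - x*t^2))⁻¹
        ≤ 1 * 1 * 1 * (δ * Real.sqrt δ)⁻¹ := by
          apply mul_le_mul _ hinv hq0 (by norm_num)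
          apply mul_le_mul _ (by nlinarith) (by positivity) (by norm_num)
          apply mul_le_mul htj hw1 hw0 (by norm_num)
      _ = (δ * Real.sqrt δ)⁻¹ := by ring
  · exact intervalIntegrable_const
  · -- differentiability
    apply Filter.Eventually.of_forall
    intro t ht x hx
    rw [uIoc_of_le (by norm_num : (0:ℝ) ≤ 1)] at ht
    obtain ⟨ht0, ht1⟩ := ht
    have hut := hu x hx t ⟨ht0.le, ht1⟩
    have hu0 : (0:ℝ) < c^2 - x * t^2 := lt_of_lt_of_le hδ0 hut
    have hinner : HasDerivAt (fun y : ℝ => c^2 - y * t^2) (-(t^2)) x := by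
      simpa using ((hasDerivAt_id x).mul_const (t^2)).const_sub (c^2)
    have hsq := hinner.sqrt hu0.ne'
    have hinv := hsq.inv (Real.sqrt_pos.2 hu0).ne'
    have hmain := hinv.const_mul (t^j * zww t)
    have hfun : (fun y : ℝ => t^j * zww t * (Real.sqrt (c^2 - y*t^2))⁻¹)
        = fun y : ℝ => t^j * zww t * zpp c y t := rfl
    simp only [Pi.inv_apply] at hmain
    rw [hfun] at hmain
    show HasDerivAt (fun x => t^j * zww t * zpp c x t) (t^j * zww t * (t^2/2) * zqq c x t) x
    refine hmain.congr_deriv (Eq.symm ?_)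
    rw [show zqq c x t = ((c^2 - x*t^2) * Real.sqrt (c^2 - x*t^2))⁻¹ from rfl]
    set s : ℝ := Real.sqrt (c^2-x*t^2) with hsdef
    have e2 : s * s = c^2-x*t^2 := Real.mul_self_sqrt hu0.le
    have hune : s ≠ 0 := (Real.sqrt_pos.2 hu0).ne'
    rw [← e2]
    field_simp

lemma zsub_base {α : ℝ} (hα : 0 < α) (f : ℝ → ℝ) :
    ∫ s in (0:ℝ)..α, f s = α * ∫ t in (0:ℝ)..1, f (t * α) := by
  have h := intervalIntegral.integral_comp_mul_right f hα.ne' (a := 0) (b := 1)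
  rw [zero_mul, one_mul] at h
  rw [h, smul_eq_mul, ← mul_assoc, mul_inv_cancel₀ hα.ne', one_mul]

lemma zsubM0 {c α : ℝ} (hα : 0 < α) (hαc : α < c) :
    (∫ s in (0:ℝ)..α, (Real.sqrt ((c^2 - s^2) * (α^2 - s^2)))⁻¹) = zMM c (α^2) 0 := by
  rw [zsub_base hα, zMM, ← intervalIntegral.integral_const_mul]
  apply intervalIntegral.integral_congr
  intro t ht
  rw [uIcc_of_le (by norm_num : (0:ℝ) ≤ 1)] at ht
  obtain ⟨ht0, ht1⟩ := ht
  have h2 : t^2 ≤ 1 := by nlinarith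
  have h3 : α^2 ≤ c^2 := by nlinarith
  have h1 : (0:ℝ) ≤ c^2 - (t*α)^2 := by nlinarith [mul_nonneg (sq_nonneg α) (sub_nonneg.2 h2)]
  have e0 : c^2 - (t*α)^2 = c^2 - α^2 * t^2 := by ring
  have e1 : α^2 - (t*α)^2 = α^2 * (1 - t^2) := by ring
  rw [e0] at h1
  show α * (Real.sqrt ((c^2 - (t*α)^2) * (α^2 - (t*α)^2)))⁻¹ = t^0 * (zww t)⁻¹ * zpp c (α^2) t
  rw [show (c^2 - (t*α)^2) * (α^2 - (t*α)^2) = (c^2 - α^2*t^2) * (α^2 * (1-t^2)) by ring]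
  rw [Real.sqrt_mul h1, Real.sqrt_mul (sq_nonneg α), Real.sqrt_sq hα.le]
  simp only [zww, zpp, pow_zero, one_mul, mul_inv]
  rw [show α * ((Real.sqrt (c^2-α^2*t^2))⁻¹ * (α⁻¹ * (Real.sqrt (1-t^2))⁻¹))
      = (α * α⁻¹) * ((Real.sqrt (1-t^2))⁻¹ * (Real.sqrt (c^2-α^2*t^2))⁻¹) by ring,
    mul_inv_cancel₀ hα.ne', one_mul]

lemma zsubM2 {c α : ℝ} (hα : 0 < α) (hαc : α < c) :
    (∫ s in (0:ℝ)..α, s^2 * (Real.sqrt ((c^2 - s^2) * (α^2 - s^2)))⁻¹)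
      = α^2 * zMM c (α^2) 2 := by
  rw [zsub_base hα, zMM, ← intervalIntegral.integral_const_mul,
    ← intervalIntegral.integral_const_mul]
  apply intervalIntegral.integral_congr
  intro t ht
  rw [uIcc_of_le (by norm_num : (0:ℝ) ≤ 1)] at ht
  obtain ⟨ht0, ht1⟩ := ht
  have h2 : t^2 ≤ 1 := by nlinarith
  have h3 : α^2 ≤ c^2 := by nlinarith
  have h1 : (0:ℝ) ≤ c^2 - (t*α)^2 := by nlinarith [mul_nonneg (sq_nonneg α) (sub_nonneg.2 h2)]
  have e0 : c^2 - (t*α)^2 = c^2 - α^2 * t^2 := by ring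
  rw [e0] at h1
  show α * ((t*α)^2 * (Real.sqrt ((c^2 - (t*α)^2) * (α^2 - (t*α)^2)))⁻¹)
      = α^2 * (t^2 * (zww t)⁻¹ * zpp c (α^2) t)
  rw [show (c^2 - (t*α)^2) * (α^2 - (t*α)^2) = (c^2 - α^2*t^2) * (α^2 * (1-t^2)) by ring]
  rw [Real.sqrt_mul h1, Real.sqrt_mul (sq_nonneg α), Real.sqrt_sq hα.le]
  simp only [zww, zpp, mul_inv]
  rw [show α * ((t*α)^2 * ((Real.sqrt (c^2-α^2*t^2))⁻¹ * (α⁻¹ * (Real.sqrt (1-t^2))⁻¹)))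
      = (α * α⁻¹) * (α^2 * (t^2 * (Real.sqrt (1-t^2))⁻¹ * (Real.sqrt (c^2-α^2*t^2))⁻¹)) by ring,
    mul_inv_cancel₀ hα.ne', one_mul]

lemma zsubG {c α : ℝ} (hα : 0 < α) (hαc : α < c) (X : ℝ) :
    (∫ s in (0:ℝ)..α, (X - s^2) * Real.sqrt ((α^2 - s^2) / (c^2 - s^2)))
      = α^2 * X * zLL c (α^2) 0 - α^2 * α^2 * zLL c (α^2) 2 := by
  have hm : 0 < α^2 := by positivity
  have hmc : α^2 < c^2 := by nlinarith
  have key : (∫ s in (0:ℝ)..α, (X - s^2) * Real.sqrt ((α^2 - s^2) / (c^2 - s^2)))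
      = ∫ t in (0:ℝ)..1, (α^2 * X * (t^0 * zww t * zpp c (α^2) t)
          - α^2 * α^2 * (t^2 * zww t * zpp c (α^2) t)) := by
    rw [zsub_base hα, ← intervalIntegral.integral_const_mul]
    apply intervalIntegral.integral_congr
    intro t ht
    rw [uIcc_of_le (by norm_num : (0:ℝ) ≤ 1)] at ht
    obtain ⟨ht0, ht1⟩ := ht
    have e1 : α^2 - (t*α)^2 = α^2 * (1 - t^2) := by ring
    have e0 : c^2 - (t*α)^2 = c^2 - α^2 * t^2 := by ring
    show α * ((X - (t*α)^2) * Real.sqrt ((α^2 - (t*α)^2) / (c^2 - (t*α)^2)))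
        = α^2 * X * (t^0 * zww t * zpp c (α^2) t) - α^2 * α^2 * (t^2 * zww t * zpp c (α^2) t)
    rw [e1, e0, Real.sqrt_div (mul_nonneg (sq_nonneg α) (by nlinarith : (0:ℝ) ≤ 1 - t^2)) _, Real.sqrt_mul (sq_nonneg α),
      Real.sqrt_sq hα.le]
    simp only [zww, zpp, pow_zero, one_mul]
    rw [div_eq_mul_inv]
    ring
  rw [key, intervalIntegral.integral_sub
    ((zL_intble hm hmc 0).const_mul _) ((zL_intble hm hmc 2).const_mul _),
    intervalIntegral.integral_const_mul, intervalIntegral.integral_const_mul,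
    zLL, zLL]

lemma zibp' (c m : ℝ) (hm : 0 < m) (hmc : m < c^2) (n : ℕ) :
    zMM c m (n+2) = ((n:ℝ)+1) * zLL c m n + 2*m*zDL c m n := by
  have h := zibp c m hm hmc n
  have iA : IntervalIntegrable (fun t : ℝ => ((n:ℝ)+1) * t^n * zww t * zpp c m t)
      volume 0 1 := by
    have e : (fun t : ℝ => ((n:ℝ)+1) * t^n * zww t * zpp c m t)
        = fun t => ((n:ℝ)+1) * (t^n * zww t * zpp c m t) := by funext t; ring
    rw [e]; exact (zL_intble hm hmc n).const_mul _
  have iB := zM_intble' c m hm hmc (n+2)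
  have iC := zQ_intble hm hmc (n+2)
  rw [intervalIntegral.integral_add (iA.sub iB) iC, intervalIntegral.integral_sub iA iB] at h
  have eA : (∫ t in (0:ℝ)..1, ((n:ℝ)+1) * t^n * zww t * zpp c m t)
      = ((n:ℝ)+1) * zLL c m n := by
    rw [zLL, ← intervalIntegral.integral_const_mul]
    apply intervalIntegral.integral_congr; intro t _; ring
  have eC : (∫ t in (0:ℝ)..1, m * t^(n+2) * zww t * zqq c m t) = 2*m*zDL c m n := by
    rw [zDL, ← intervalIntegral.integral_const_mul]
    apply intervalIntegral.integral_congr; intro t _; ring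
  rw [eA, eC] at h
  rw [zMM]
  linarith [h]

lemma zibp0 (c m : ℝ) (hm : 0 < m) (hmc : m < c^2) :
    zMM c m 2 = zLL c m 0 + 2*m*zDL c m 0 := by
  have := zibp' c m hm hmc 0
  norm_num at this
  convert this using 2
lemma zibp2 (c m : ℝ) (hm : 0 < m) (hmc : m < c^2) :
    zMM c m 4 = 3*zLL c m 2 + 2*m*zDL c m 2 := by
  have := zibp' c m hm hmc 2
  norm_num at this
  convert this using 2

/-- identity (2.17) of Lemma 2.3:
`z′(ξ) = 6(c² + a(ξ)²) + 12h(ξ)`, where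
`z(ξ) = (12ξ(c² − a(ξ)²) + 3c⁴ + 9a(ξ)⁴ − 6a(ξ)²c²)/2`. -/
theorem z_derivative_formula (c : ℝ) (hc : 0 < c) (a : ℝ → ℝ)
    (hrange : ∀ ξ ∈ Set.Ioo (-c ^ 2 / 2) (c ^ 2 / 3), 0 < a ξ ∧ a ξ < c)
    (hdiff : ∀ ξ ∈ Set.Ioo (-c ^ 2 / 2) (c ^ 2 / 3), DifferentiableAt ℝ a ξ)
    (hnorm : ∀ ξ ∈ Set.Ioo (-c ^ 2 / 2) (c ^ 2 / 3),
      ∫ s in (0:ℝ)..(a ξ),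
        (ξ + (c ^ 2 - (a ξ) ^ 2) / 2 - s ^ 2) *
          Real.sqrt (((a ξ) ^ 2 - s ^ 2) / (c ^ 2 - s ^ 2)) = 0) :
    ∀ ξ ∈ Set.Ioo (-c ^ 2 / 2) (c ^ 2 / 3),
      deriv (fun t =>
          (12 * t * (c ^ 2 - (a t) ^ 2) + 3 * c ^ 4 + 9 * (a t) ^ 4 - 6 * (a t) ^ 2 * c ^ 2) / 2) ξ
        = 6 * (c ^ 2 + (a ξ) ^ 2) +
          12 * (-(∫ s in (0:ℝ)..(a ξ), s ^ 2 * (Real.sqrt ((c ^ 2 - s ^ 2) * ((a ξ) ^ 2 - s ^ 2)))⁻¹) /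
            (∫ s in (0:ℝ)..(a ξ), (Real.sqrt ((c ^ 2 - s ^ 2) * ((a ξ) ^ 2 - s ^ 2)))⁻¹)) := by
  intro ξ hξ
  obtain ⟨ha0, hac⟩ := hrange ξ hξ
  have ha' : HasDerivAt a (deriv a ξ) ξ := (hdiff ξ hξ).hasDerivAt
  have hm : 0 < (a ξ)^2 := by positivity
  have hmc : (a ξ)^2 < c^2 := by nlinarith
  have h2 : HasDerivAt (fun t => (a t)^2) (2 * a ξ * deriv a ξ) ξ := by
    exact (ha'.pow 2).congr_deriv (by norm_num)
  -- notation
  have he1 : zLL c ((a ξ)^2) 0 = zMM c ((a ξ)^2) 0 - zMM c ((a ξ)^2) 2 := zLM c _ hm hmc 0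
  have he2 : zLL c ((a ξ)^2) 2 = zMM c ((a ξ)^2) 2 - zMM c ((a ξ)^2) 4 := zLM c _ hm hmc 2
  have he3 : zMM c ((a ξ)^2) 2 = zLL c ((a ξ)^2) 0 + 2*(a ξ)^2*zDL c ((a ξ)^2) 0 :=
    zibp0 c _ hm hmc
  have he4 : zMM c ((a ξ)^2) 4 = 3*zLL c ((a ξ)^2) 2 + 2*(a ξ)^2*zDL c ((a ξ)^2) 2 :=
    zibp2 c _ hm hmc
  have hM0 : 0 < zMM c ((a ξ)^2) 0 := zM0_pos hm hmc
  -- the identity Φ = 0 near ξ, and its derivative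
  have hL0c : HasDerivAt (fun ζ => zLL c ((a ζ)^2) 0)
      (zDL c ((a ξ)^2) 0 * (2 * a ξ * deriv a ξ)) ξ := by
    have := (zLL_hasDeriv c ((a ξ)^2) hm hmc 0).comp ξ h2
    exact this
  have hL2c : HasDerivAt (fun ζ => zLL c ((a ζ)^2) 2)
      (zDL c ((a ξ)^2) 2 * (2 * a ξ * deriv a ξ)) ξ := by
    have := (zLL_hasDeriv c ((a ξ)^2) hm hmc 2).comp ξ h2
    exact this
  have hX : HasDerivAt (fun ζ => ζ + (c^2 - (a ζ)^2)/2)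
      (1 + -(2 * a ξ * deriv a ξ)/2) ξ :=
    (hasDerivAt_id' ξ).add ((h2.const_sub (c^2)).div_const 2)
  have hΦ' := ((h2.mul hX).mul hL0c).sub ((h2.mul h2).mul hL2c)
  have hΦev : (fun ζ => (a ζ)^2 * (ζ + (c^2 - (a ζ)^2)/2) * zLL c ((a ζ)^2) 0
      - (a ζ)^2 * (a ζ)^2 * zLL c ((a ζ)^2) 2) =ᶠ[nhds ξ] (fun _ => 0) := by
    filter_upwards [isOpen_Ioo.mem_nhds hξ] with ζ hζ
    obtain ⟨hb0, hbc⟩ := hrange ζ hζ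
    have hn := hnorm ζ hζ
    rw [zsubG hb0 hbc (ζ + (c^2 - (a ζ)^2)/2)] at hn
    have : (a ζ)^2 * (ζ + (c^2 - (a ζ)^2)/2) * zLL c ((a ζ)^2) 0
        - (a ζ)^2 * (a ζ)^2 * zLL c ((a ζ)^2) 2 = 0 := by linarith [hn]
    exact this
  have hzero : deriv (fun _ : ℝ => (0:ℝ)) ξ = 0 := by simp
  have hD := hΦ'.deriv.symm.trans (hΦev.deriv_eq.trans hzero)
  simp only [Pi.mul_apply] at hD
  -- derivative of the z-function
  have h4 : HasDerivAt (fun t => (a t)^4) (4*(a ξ)^3 * deriv a ξ) ξ := by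
    exact (ha'.pow 4).congr_deriv (by norm_num)
  have hz := (((((hasDerivAt_id' ξ).const_mul 12).mul (h2.const_sub (c^2))).add_const
      (3*c^4)).add (h4.const_mul 9)).sub ((h2.const_mul 6).mul_const (c^2)) |>.div_const 2
  rw [show deriv (fun t => (12 * t * (c ^ 2 - (a t) ^ 2) + 3 * c ^ 4 + 9 * (a t) ^ 4 - 6 * (a t) ^ 2 * c ^ 2) / 2) ξ = _ from hz.deriv, zsubM0 ha0 hac, zsubM2 ha0 hac]
  have hd0 : 2*(a ξ)^2*zDL c ((a ξ)^2) 0 = zMM c ((a ξ)^2) 2 - zLL c ((a ξ)^2) 0 := by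
    linarith
  have hd2 : 2*(a ξ)^2*zDL c ((a ξ)^2) 2 = zMM c ((a ξ)^2) 4 - 3*zLL c ((a ξ)^2) 2 := by
    linarith
  have hT : (a ξ)^2 * zLL c ((a ξ)^2) 0 + ((2*a ξ*deriv a ξ)/2)
      * ((ξ + (c^2-(a ξ)^2)/2) - (a ξ)^2) * zMM c ((a ξ)^2) 0 = 0 := by
    linear_combination hD - ((2*a ξ*deriv a ξ)*(ξ + (c^2-(a ξ)^2)/2)/2)*hd0
      + ((a ξ)^2*(2*a ξ*deriv a ξ)/2)*hd2
      + ((a ξ)^2*(2*a ξ*deriv a ξ)/2 - (2*a ξ*deriv a ξ)*(ξ + (c^2-(a ξ)^2)/2)/2)*he1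
      + ((a ξ)^2*(2*a ξ*deriv a ξ)/2)*he2
  have hM0ne : zMM c ((a ξ)^2) 0 ≠ 0 := hM0.ne'
  field_simp
  linear_combination (-24)*hT + 24*(a ξ)^2*he1
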